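/- (Existence of a self-similar three-vortex collapse for every α) For every α > 0 there exist a nonzero real a, a time T > 0, pairwise distinct initial points x_1(0), x_2(0), x_3(0) ∈ ℝ², and a solution (x_1, x_2, x_3) of the α-point-vortex system on [0,T) with intensities a_1 = a, a_2 = a_3 = 1 and these initial values, such that |x_2(0) − x_3(0)| = 1, |x_2(t) − x_3(t)| = (1 − t/T)^{1/(α+1)} for all t ∈ [0,T), and |x_i(t) − x_j(t)| → 0 as t → T⁻ for all i, j ∈ {1,2,3}. In particular, the α-point-vortex system admits collapses in finite time, and the Hölder exponent 1/(α+1) is optimal. -/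

import Mathlib

open Real Set Filter Complex

set_option maxHeartbeats 1000000


theorem vortex_aux (α : ℝ) (hα : 0 < α) (d₁ d₂ : ℝ)
    (h1 : 1 < d₁) (h2 : 0 < d₂) (h3 : d₂ < 1) (h4 : d₁ < 1 + d₂)
    (hC1 : d₁ ^ 2 - d₁ ^ (1 - α) = d₂ ^ (1 - α) - d₂ ^ 2) :
    ∃ (a T : ℝ) (x : Fin 3 → ℝ → ℂ), a ≠ 0 ∧ 0 < T ∧
      (∀ i j, i ≠ j → ∀ t ∈ Set.Ico (0:ℝ) T, x i t ≠ x j t) ∧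
      (∀ i, ∀ t ∈ Set.Ico (0:ℝ) T,
        HasDerivWithinAt (x i)
          (∑ j ∈ Finset.univ.filter (fun j => j ≠ i),
            ((![a, 1, 1]) j / ‖x i t - x j t‖ ^ (α + 1)) • (Complex.I * (x i t - x j t)))
          (Set.Ico (0:ℝ) T) t) ∧
      ‖x 1 0 - x 2 0‖ = 1 ∧
      (∀ t ∈ Set.Ico (0:ℝ) T, ‖x 1 t - x 2 t‖ = (1 - t / T) ^ (1 / (α + 1))) ∧
      (∀ i j : Fin 3, Filter.Tendsto (fun t => ‖x i t - x j t‖)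
        (nhdsWithin T (Set.Iio T)) (nhds 0)) := by
  have hd₁0 : (0:ℝ) < d₁ := lt_trans one_pos h1
  set m : ℝ := α + 1 with hm
  have hm0 : (0:ℝ) < m := by positivity
  have hm1 : (1:ℝ) < m := by simp [hm]; linarith
  set p : ℝ := d₁ ^ (-m) with hpdef
  set q : ℝ := d₂ ^ (-m) with hqdef
  have hp0 : 0 < p := Real.rpow_pos_of_pos hd₁0 _
  have hp1 : p < 1 := Real.rpow_lt_one_of_one_lt_of_neg h1 (by linarith)
  have hq1 : 1 < q := by
    rw [hqdef, Real.one_lt_rpow_iff_of_pos h2]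
    exact Or.inr ⟨h3, by linarith⟩
  have hd1m : d₁ ^ m = 1 / p := by
    rw [hpdef, Real.rpow_neg hd₁0.le, one_div, inv_inv]
  have hd2m : d₂ ^ m = 1 / q := by
    rw [hqdef, Real.rpow_neg h2.le, one_div, inv_inv]
  -- C1 in p-q form
  have hA : (1 - p) * d₁ ^ 2 = (q - 1) * d₂ ^ 2 := by
    have e1 : d₁ ^ (1 - α) = d₁ ^ 2 * p := by
      rw [hpdef, ← Real.rpow_two, ← Real.rpow_add hd₁0]; norm_num [hm]; ring_nf
    have e2 : d₂ ^ (1 - α) = d₂ ^ 2 * q := by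
      rw [hqdef, ← Real.rpow_two, ← Real.rpow_add h2]; norm_num [hm]; ring_nf
    rw [e1, e2] at hC1
    linear_combination hC1
  set A : ℝ := d₂ ^ 2 / d₁ ^ 2 with hAdef
  have hA0 : 0 < A := by positivity
  have hAq : (q - 1) * A = 1 - p := by
    rw [hAdef]; field_simp; linarith [hA]
  set wr : ℝ := (1 + A - 1 / d₁ ^ 2) / 2 with hwrdef
  have hwr0 : 0 < wr := by
    have : 1 / d₁ ^ 2 < 1 := by
      rw [div_lt_one (by positivity)]; nlinarith
    rw [hwrdef]; linarith
  set W : ℝ := A - wr ^ 2 with hWdef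
  have hWid : W * (4 * d₁ ^ 4) = (1 - (d₁ - d₂) ^ 2) * ((d₁ + d₂) ^ 2 - 1) := by
    rw [hWdef, hwrdef, hAdef]; field_simp; ring
  have hW0 : 0 < W := by
    have f1 : 0 < 1 - (d₁ - d₂) ^ 2 := by nlinarith
    have f2 : 0 < (d₁ + d₂) ^ 2 - 1 := by nlinarith
    have h5 : 0 < W * (4 * d₁ ^ 4) := by rw [hWid]; exact mul_pos f1 f2
    have h6 : (0:ℝ) < 4 * d₁ ^ 4 := by positivity
    rcases mul_pos_iff.mp h5 with ⟨hw, _⟩ | ⟨_, hneg⟩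
    · exact hw
    · linarith
  set wi : ℝ := Real.sqrt W with hwidef
  have hwi0 : 0 < wi := Real.sqrt_pos.2 hW0
  have hwi2 : wi ^ 2 = W := Real.sq_sqrt hW0.le
  have hqp : 0 < q - p := by linarith
  set a : ℝ := 2 * (q - 1) * wr / (q - p) - 1 with hadef
  have hR1 : (1 + a) * (q - p) = 2 * (q - 1) * wr := by
    rw [hadef]; field_simp; ring
  have hR2 : (q - 1) * (wr ^ 2 + wi ^ 2) = 1 - p := by
    rw [hwi2, hWdef]; rw [← hAq]; ring
  have ha0 : a ≠ 0 := by
    intro h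
    have h1' : q - p = 2 * (q - 1) * wr := by
      have := hR1; rw [h] at this; linarith
    have key : (2 * (q - 1) * wi) ^ 2 = -((q - 1) - (1 - p)) ^ 2 := by
      linear_combination (4 * (q - 1)) * hR2 + (q - p + 2 * (q - 1) * wr) * h1'
    have hpos : 0 < (2 * (q - 1) * wi) ^ 2 := by
      have h9 : 0 < 2 * (q - 1) * wi :=
        mul_pos (mul_pos two_pos (by linarith)) hwi0
      exact pow_pos h9 2
    linarith [sq_nonneg ((q - 1) - (1 - p))]
  have ha2 : 0 < a + 2 := by
    rw [hadef]
    have : 0 < 2 * (q - 1) * wr / (q - p) :=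
      div_pos (mul_pos (mul_pos two_pos (by linarith)) hwr0) hqp
    linarith
  -- complex data
  have hac2 : (a : ℂ) + 2 ≠ 0 := by
    have h9 : ((a + 2 : ℝ) : ℂ) ≠ 0 := Complex.ofReal_ne_zero.mpr (ne_of_gt ha2)
    push_cast at h9; exact h9
  have cR1 : ((1 : ℂ) + (a:ℂ)) * ((q:ℂ) - (p:ℂ)) = 2 * ((q:ℂ) - 1) * (wr:ℂ) := by
    exact_mod_cast congrArg (Complex.ofReal) hR1
  have cR2 : ((q:ℂ) - 1) * ((wr:ℂ) ^ 2 + (wi:ℂ) ^ 2) = 1 - (p:ℂ) := by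
    exact_mod_cast congrArg (Complex.ofReal) hR2
  set u : ℂ := (d₁ : ℂ) with hudef
  set w : ℂ := (wr : ℂ) + (wi : ℂ) * Complex.I with hwdef
  set v : ℂ := u * w with hvdef
  set lam : ℂ := (((1 + a) * p + 1 : ℝ) : ℂ) + ((q - 1 : ℝ) : ℂ) * w with hlamdef
  set z0 : ℂ := (u + v) / ((a : ℂ) + 2) with hz0def
  set z1 : ℂ := z0 - u with hz1def
  set z2 : ℂ := z0 - v with hz2def
  have hV0 : (p : ℂ) * u + (q : ℂ) * v = lam * z0 := by
    rw [hz0def, hvdef, hlamdef, hwdef, hudef, ← mul_div_assoc, eq_comm, div_eq_iff hac2, eq_comm]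
    push_cast
    linear_combination ((d₁:ℂ) * ((wr:ℂ) + (wi:ℂ) * Complex.I)) * cR1 + (d₁:ℂ) * cR2
      - (d₁:ℂ) * ((q:ℂ) - 1) * (wi:ℂ) ^ 2 * Complex.I_sq
  have hz1' : z1 = (v - ((a:ℂ) + 1) * u) / ((a:ℂ) + 2) := by
    rw [hz1def, hz0def]; field_simp; ring
  have hz2' : z2 = (u - ((a:ℂ) + 1) * v) / ((a:ℂ) + 2) := by
    rw [hz2def, hz0def]; field_simp; ring
  have hV1 : -(a : ℂ) * (p : ℂ) * u + (v - u) = lam * z1 := by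
    rw [hz1', hvdef, hlamdef, hwdef, hudef, ← mul_div_assoc, eq_comm, div_eq_iff hac2, eq_comm]
    push_cast
    linear_combination ((d₁:ℂ) * ((wr:ℂ) + (wi:ℂ) * Complex.I)) * cR1 + (d₁:ℂ) * cR2
      - (d₁:ℂ) * ((q:ℂ) - 1) * (wi:ℂ) ^ 2 * Complex.I_sq
  have hV2 : -(a : ℂ) * (q : ℂ) * v + (u - v) = lam * z2 := by
    rw [hz2', hvdef, hlamdef, hwdef, hudef, ← mul_div_assoc, eq_comm, div_eq_iff hac2, eq_comm]
    push_cast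
    linear_combination (-(1 + (a:ℂ)) * (d₁:ℂ) * ((wr:ℂ) + (wi:ℂ) * Complex.I)) * cR1
      - (1 + (a:ℂ)) * (d₁:ℂ) * cR2
      + (1 + (a:ℂ)) * (d₁:ℂ) * ((q:ℂ) - 1) * (wi:ℂ) ^ 2 * Complex.I_sq
  -- norms
  have hnu : ‖u‖ = d₁ := by
    rw [hudef, Complex.norm_real, Real.norm_of_nonneg hd₁0.le]
  have hww : (wr : ℝ) ^ 2 + wi ^ 2 = A := by
    rw [hwi2, hWdef]; ring
  have hnv : ‖v‖ = d₂ := by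
    have h9 : Complex.normSq v = d₂ ^ 2 := by
      rw [hvdef, map_mul, hudef, hwdef, Complex.normSq_ofReal, Complex.normSq_add_mul_I]
      rw [hww, hAdef]; field_simp
    rw [Complex.norm_def, h9, Real.sqrt_sq h2.le]
  have hnvu : ‖v - u‖ = 1 := by
    have h9 : Complex.normSq (v - u) = 1 := by
      have e : v - u = (d₁ : ℂ) * (((wr - 1 : ℝ) : ℂ) + (wi:ℝ) * Complex.I) := by
        rw [hvdef, hwdef, hudef]; push_cast; ring
      rw [e, map_mul, Complex.normSq_ofReal, Complex.normSq_add_mul_I]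
      have e2 : (wr - 1) ^ 2 + wi ^ 2 = 1 / d₁ ^ 2 := by
        rw [hwi2, hWdef, hwrdef, hAdef]; field_simp; ring
      rw [e2]; field_simp
    rw [Complex.norm_def, h9, Real.sqrt_one]
  have hu0 : u ≠ 0 := by
    intro h; rw [h, norm_zero] at hnu; linarith
  have hv0 : v ≠ 0 := by
    intro h; rw [h, norm_zero] at hnv; linarith
  have hvu0 : v - u ≠ 0 := by
    intro h; rw [h, norm_zero] at hnvu; norm_num at hnvu
  -- time and exponent
  have hlam_im : lam.im = (q - 1) * wi := by
    rw [hlamdef, hwdef]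
    simp [Complex.add_im, Complex.mul_im]
  have hlim0 : 0 < (q - 1) * wi := mul_pos (by linarith) hwi0
  set T : ℝ := 1 / (m * ((q - 1) * wi)) with hTdef
  have hT0 : 0 < T := by rw [hTdef]; exact div_pos one_pos (mul_pos hm0 hlim0)
  set γ : ℂ := -Complex.I * lam * (T : ℝ) with hγdef
  have hγre : γ.re = 1 / m := by
    have e1 : γ.re = lam.im * T := by
      rw [hγdef]; simp [Complex.mul_re, Complex.mul_im]
    have h9 : q - 1 ≠ 0 := ne_of_gt (by linarith)
    have h10 : wi ≠ 0 := hwi0.ne'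
    have hmne : m ≠ 0 := hm0.ne'
    rw [e1, hlam_im, hTdef]
    field_simp
  set f : ℝ → ℂ := fun t => Complex.exp (γ * ((Real.log (1 - t / T) : ℝ) : ℂ)) with hfdef
  have hf0 : ∀ t, f t ≠ 0 := fun t => Complex.exp_ne_zero _
  have hnf : ∀ t : ℝ, 0 < 1 - t / T → ‖f t‖ = (1 - t / T) ^ (1 / m) := by
    intro t ht
    rw [hfdef]
    simp only [Complex.norm_exp]
    rw [Real.rpow_def_of_pos ht]
    congr 1
    simp [Complex.mul_re, hγre]
    ring
  set x : Fin 3 → ℝ → ℂ := ![fun t => f t * z0, fun t => f t * z1, fun t => f t * z2]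
    with hxdef
  have hne01 : z0 ≠ z1 := by
    rw [hz1def]; intro h; exact hu0 (by linear_combination h)
  have hne02 : z0 ≠ z2 := by
    rw [hz2def]; intro h; exact hv0 (by linear_combination h)
  have hne12 : z1 ≠ z2 := by
    rw [hz1def, hz2def]; intro h; exact hvu0 (by linear_combination h)
  clear_value u w v lam z0 z1 z2 T γ
  refine ⟨a, T, x, ha0, hT0, ?_, ?_, ?_, ?_, ?_⟩
  · -- distinctness
    intro i j hij t _
    have key : ∀ zA zB : ℂ, zA ≠ zB → f t * zA ≠ f t * zB := by
      intro zA zB hne heq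
      exact hne (mul_left_cancel₀ (hf0 t) heq)
    fin_cases i <;> fin_cases j <;>
      simp only [hxdef, Matrix.cons_val_zero, Matrix.cons_val_one, Matrix.head_cons,
        Matrix.cons_val_two, Matrix.tail_cons] <;>
      first
        | exact absurd rfl hij
        | exact key _ _ hne01
        | exact key _ _ hne02
        | exact key _ _ hne12
        | exact key _ _ hne01.symm
        | exact key _ _ hne02.symm
        | exact key _ _ hne12.symm
  · -- the ODE
    intro i t ht
    obtain ⟨ht0, htT⟩ := ht
    have hτ0 : 0 < 1 - t / T := by
      rw [sub_pos, div_lt_one hT0]; exact htT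
    set τ : ℝ := 1 - t / T with hτdef
    have hτne : τ ≠ 0 := ne_of_gt hτ0
    have hd : HasDerivAt f (γ * ((-(1 / T) / τ : ℝ) : ℂ) * f t) t := by
      have h1 : HasDerivAt (fun s : ℝ => 1 - s / T) (-(1 / T)) t := by
        simpa using ((hasDerivAt_id t).div_const T).const_sub 1
      have h2 : HasDerivAt (fun s : ℝ => Real.log (1 - s / T)) (-(1 / T) / τ) t :=
        h1.log (ne_of_gt hτ0)
      have h3 := ((h2.ofReal_comp).const_mul γ).cexp
      rw [hfdef]
      convert h3 using 1
      rw [hτdef]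
      ring
    have hc : γ * ((-(1 / T) / τ : ℝ) : ℂ) = Complex.I * lam / ((τ : ℝ) : ℂ) := by
      rw [hγdef]
      have hTne : ((T : ℝ) : ℂ) ≠ 0 := Complex.ofReal_ne_zero.mpr hT0.ne'
      have hτnec : ((τ : ℝ) : ℂ) ≠ 0 := Complex.ofReal_ne_zero.mpr hτne
      push_cast
      field_simp
    have hτpow : (τ ^ (1 / m)) ^ m = τ := by
      rw [← Real.rpow_mul hτ0.le, one_div, inv_mul_cancel₀ (ne_of_gt hm0), Real.rpow_one]
    have hpow : ∀ c : ℝ, 0 < c → (τ ^ (1 / m) * c) ^ m = τ * c ^ m := by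
      intro c hc0
      rw [Real.mul_rpow (Real.rpow_nonneg hτ0.le _) hc0.le, hτpow]
    have hn01 : ‖f t * z0 - f t * z1‖ ^ m = τ / p := by
      have e : f t * z0 - f t * z1 = f t * u := by rw [hz1def]; ring
      rw [e, norm_mul, hnf t hτ0, ← hτdef, hnu, hpow d₁ hd₁0, hd1m, mul_one_div]
    have hn02 : ‖f t * z0 - f t * z2‖ ^ m = τ / q := by
      have e : f t * z0 - f t * z2 = f t * v := by rw [hz2def]; ring
      rw [e, norm_mul, hnf t hτ0, ← hτdef, hnv, hpow d₂ h2, hd2m, mul_one_div]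
    have hn12 : ‖f t * z1 - f t * z2‖ ^ m = τ := by
      have e : f t * z1 - f t * z2 = f t * (v - u) := by rw [hz1def, hz2def]; ring
      rw [e, norm_mul, hnf t hτ0, ← hτdef, hnvu, mul_one, hτpow]
    have hτc : ((τ : ℝ) : ℂ) ≠ 0 := Complex.ofReal_ne_zero.mpr hτne
    have key : ∀ (zz : ℂ), HasDerivWithinAt (fun s => f s * zz)
        (γ * ((-(1 / T) / τ : ℝ) : ℂ) * f t * zz) (Set.Ico 0 T) t := fun zz =>
      (hd.mul_const zz).hasDerivWithinAt
    have H0 : HasDerivWithinAt (x 0)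
        (∑ j ∈ Finset.univ.filter (fun j => j ≠ (0 : Fin 3)),
          ((![a, 1, 1]) j / ‖x 0 t - x j t‖ ^ m) • (Complex.I * (x 0 t - x j t)))
        (Set.Ico 0 T) t := by
      rw [show (Finset.univ.filter (fun j => j ≠ (0 : Fin 3))) = {1, 2} from by decide,
        Finset.sum_insert (by decide), Finset.sum_singleton]
      simp only [hxdef, Matrix.cons_val_zero, Matrix.cons_val_one, Matrix.head_cons,
        Matrix.cons_val_two, Matrix.tail_cons]
      rw [hn01, hn02]
      have hval : ((1 : ℝ) / (τ / p)) • (Complex.I * (f t * z0 - f t * z1))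
          + ((1 : ℝ) / (τ / q)) • (Complex.I * (f t * z0 - f t * z2))
          = γ * ((-(1 / T) / τ : ℝ) : ℂ) * f t * z0 := by
        rw [hc, Complex.real_smul, Complex.real_smul]
        have e1 : f t * z0 - f t * z1 = f t * u := by rw [hz1def]; ring
        have e2 : f t * z0 - f t * z2 = f t * v := by rw [hz2def]; ring
        have c1 : ((1 / (τ / p) : ℝ) : ℂ) = (p : ℂ) / (τ : ℂ) := by
          push_cast; rw [one_div_div]
        have c2 : ((1 / (τ / q) : ℝ) : ℂ) = (q : ℂ) / (τ : ℂ) := by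
          push_cast; rw [one_div_div]
        rw [e1, e2, c1, c2]
        linear_combination (Complex.I * f t / ((τ : ℝ) : ℂ)) * hV0
      rw [hval]
      exact key z0
    have H1 : HasDerivWithinAt (x 1)
        (∑ j ∈ Finset.univ.filter (fun j => j ≠ (1 : Fin 3)),
          ((![a, 1, 1]) j / ‖x 1 t - x j t‖ ^ m) • (Complex.I * (x 1 t - x j t)))
        (Set.Ico 0 T) t := by
      rw [show (Finset.univ.filter (fun j => j ≠ (1 : Fin 3))) = {0, 2} from by decide,
        Finset.sum_insert (by decide), Finset.sum_singleton]
      simp only [hxdef, Matrix.cons_val_zero, Matrix.cons_val_one, Matrix.head_cons,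
        Matrix.cons_val_two, Matrix.tail_cons]
      have hn10 : ‖f t * z1 - f t * z0‖ ^ m = τ / p := by rw [norm_sub_rev]; exact hn01
      rw [hn10, hn12]
      have hval : ((a : ℝ) / (τ / p)) • (Complex.I * (f t * z1 - f t * z0))
          + ((1 : ℝ) / τ) • (Complex.I * (f t * z1 - f t * z2))
          = γ * ((-(1 / T) / τ : ℝ) : ℂ) * f t * z1 := by
        rw [hc, Complex.real_smul, Complex.real_smul]
        have e1 : f t * z1 - f t * z0 = -(f t * u) := by rw [hz1def]; ring
        have e2 : f t * z1 - f t * z2 = f t * (v - u) := by rw [hz1def, hz2def]; ring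
        have c1 : ((a / (τ / p) : ℝ) : ℂ) = (a : ℂ) * (p : ℂ) / (τ : ℂ) := by
          push_cast; rw [div_div_eq_mul_div]
        have c2 : ((1 / τ : ℝ) : ℂ) = 1 / (τ : ℂ) := by push_cast; rfl
        rw [e1, e2, c1, c2]
        linear_combination (Complex.I * f t / ((τ : ℝ) : ℂ)) * hV1
      rw [hval]
      exact key z1
    have H2 : HasDerivWithinAt (x 2)
        (∑ j ∈ Finset.univ.filter (fun j => j ≠ (2 : Fin 3)),
          ((![a, 1, 1]) j / ‖x 2 t - x j t‖ ^ m) • (Complex.I * (x 2 t - x j t)))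
        (Set.Ico 0 T) t := by
      rw [show (Finset.univ.filter (fun j => j ≠ (2 : Fin 3))) = {0, 1} from by decide,
        Finset.sum_insert (by decide), Finset.sum_singleton]
      simp only [hxdef, Matrix.cons_val_zero, Matrix.cons_val_one, Matrix.head_cons,
        Matrix.cons_val_two, Matrix.tail_cons]
      have hn20 : ‖f t * z2 - f t * z0‖ ^ m = τ / q := by rw [norm_sub_rev]; exact hn02
      have hn21 : ‖f t * z2 - f t * z1‖ ^ m = τ := by rw [norm_sub_rev]; exact hn12
      rw [hn20, hn21]
      have hval : ((a : ℝ) / (τ / q)) • (Complex.I * (f t * z2 - f t * z0))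
          + ((1 : ℝ) / τ) • (Complex.I * (f t * z2 - f t * z1))
          = γ * ((-(1 / T) / τ : ℝ) : ℂ) * f t * z2 := by
        rw [hc, Complex.real_smul, Complex.real_smul]
        have e1 : f t * z2 - f t * z0 = -(f t * v) := by rw [hz2def]; ring
        have e2 : f t * z2 - f t * z1 = f t * (u - v) := by rw [hz1def, hz2def]; ring
        have c1 : ((a / (τ / q) : ℝ) : ℂ) = (a : ℂ) * (q : ℂ) / (τ : ℂ) := by
          push_cast; rw [div_div_eq_mul_div]
        have c2 : ((1 / τ : ℝ) : ℂ) = 1 / (τ : ℂ) := by push_cast; rfl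
        rw [e1, e2, c1, c2]
        linear_combination (Complex.I * f t / ((τ : ℝ) : ℂ)) * hV2
      rw [hval]
      exact key z2
    fin_cases i
    · exact H0
    · exact H1
    · exact H2
  · -- initial distance
    have hf00 : f 0 = 1 := by
      rw [hfdef]; simp
    show ‖f 0 * z1 - f 0 * z2‖ = 1
    rw [hf00]
    have e : (1 : ℂ) * z1 - 1 * z2 = v - u := by rw [hz1def, hz2def]; ring
    rw [e, hnvu]
  · -- distance law
    intro t ht
    obtain ⟨ht0, htT⟩ := ht
    have hτ0 : 0 < 1 - t / T := by
      rw [sub_pos, div_lt_one hT0]; exact htT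
    show ‖f t * z1 - f t * z2‖ = (1 - t / T) ^ (1 / m)
    have e : f t * z1 - f t * z2 = f t * (v - u) := by rw [hz1def, hz2def]; ring
    rw [e, norm_mul, hnf t hτ0, hnvu, mul_one]
  · -- collapse
    have main : ∀ z : ℂ, Filter.Tendsto (fun t => ‖f t * z‖)
        (nhdsWithin T (Set.Iio T)) (nhds 0) := by
      intro z
      have h1 : Filter.Tendsto (fun t : ℝ => 1 - t / T) (nhdsWithin T (Set.Iio T)) (nhds 0) := by
        have hcont : Filter.Tendsto (fun t : ℝ => 1 - t / T) (nhds T) (nhds (1 - T / T)) :=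
          (continuous_const.sub (continuous_id.div_const T)).tendsto T
        rw [div_self hT0.ne'] at hcont
        simpa using hcont.mono_left nhdsWithin_le_nhds
      have h2 : Filter.Tendsto (fun s : ℝ => s ^ (1 / m)) (nhds 0) (nhds 0) := by
        have hco := (Real.continuousAt_rpow_const 0 (1 / m) (Or.inr (by positivity))).tendsto
        rwa [Real.zero_rpow (by positivity : (0:ℝ) < 1/m).ne'] at hco
      have h3 : Filter.Tendsto (fun t => (1 - t / T) ^ (1 / m) * ‖z‖)
          (nhdsWithin T (Set.Iio T)) (nhds 0) := by
        simpa using (h2.comp h1).mul_const ‖z‖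
      refine Filter.Tendsto.congr' ?_ h3
      filter_upwards [self_mem_nhdsWithin] with s hs
      have hs0 : 0 < 1 - s / T := by
        rw [sub_pos, div_lt_one hT0]; exact hs
      rw [norm_mul, hnf s hs0]
    intro i j
    fin_cases i <;> fin_cases j <;>
      simp only [hxdef, Fin.zero_eta, Fin.mk_one, Fin.reduceFinMk, Matrix.cons_val_zero,
        Matrix.cons_val_one, Matrix.head_cons, Matrix.cons_val_two, Matrix.tail_cons]
    · simpa only [mul_sub] using main (z0 - z0)
    · simpa only [mul_sub] using main (z0 - z1)
    · simpa only [mul_sub] using main (z0 - z2)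
    · simpa only [mul_sub] using main (z1 - z0)
    · simpa only [mul_sub] using main (z1 - z1)
    · simpa only [mul_sub] using main (z1 - z2)
    · simpa only [mul_sub] using main (z2 - z0)
    · simpa only [mul_sub] using main (z2 - z1)
    · simpa only [mul_sub] using main (z2 - z2)


/-- **Existence of a self-similar three-vortex collapse for every `α > 0`.**
Identifying `ℝ²` with `ℂ` (so `v^⊥ = I * v`): for every `α > 0` there exist a nonzero real
`a`, a time `T > 0`, and a solution `(x₀, x₁, x₂)` of the `α`-point-vortex system on `[0,T)`
with intensities `(a, 1, 1)` and pairwise distinct positions, such that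
`‖x₁(0) − x₂(0)‖ = 1`, `‖x₁(t) − x₂(t)‖ = (1 − t/T)^{1/(α+1)}` on `[0,T)`, and all mutual
distances tend to `0` as `t → T⁻`: a collapse in finite time with the optimal Hölder exponent
`1/(α+1)`. -/
theorem exists_self_similar_three_vortex_collapse (α : ℝ) (hα : 0 < α) :
    ∃ (a T : ℝ) (x : Fin 3 → ℝ → ℂ), a ≠ 0 ∧ 0 < T ∧
      (∀ i j, i ≠ j → ∀ t ∈ Set.Ico (0:ℝ) T, x i t ≠ x j t) ∧
      (∀ i, ∀ t ∈ Set.Ico (0:ℝ) T,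
        HasDerivWithinAt (x i)
          (∑ j ∈ Finset.univ.filter (fun j => j ≠ i),
            ((![a, 1, 1]) j / ‖x i t - x j t‖ ^ (α + 1)) • (Complex.I * (x i t - x j t)))
          (Set.Ico (0:ℝ) T) t) ∧
      ‖x 1 0 - x 2 0‖ = 1 ∧
      (∀ t ∈ Set.Ico (0:ℝ) T, ‖x 1 t - x 2 t‖ = (1 - t / T) ^ (1 / (α + 1))) ∧
      (∀ i j : Fin 3, Filter.Tendsto (fun t => ‖x i t - x j t‖)
        (nhdsWithin T (Set.Iio T)) (nhds 0)) := by
  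
  set L : ℝ → ℝ := fun d => d ^ 2 - d ^ (1 - α) with hLdef
  set Rf : ℝ → ℝ := fun d => d ^ (1 - α) - d ^ 2 with hRdef
  have hL32 : 0 < L (3 / 2) := by
    have h9 : ((3:ℝ)/2) ^ (1 - α) < ((3:ℝ)/2) ^ (2:ℝ) :=
      Real.rpow_lt_rpow_of_exponent_lt (by norm_num) (by linarith)
    rw [Real.rpow_two] at h9
    simp only [hLdef]
    linarith
  have hRtend : Filter.Tendsto Rf (nhdsWithin 1 (Set.Iio 1)) (nhds 0) := by
    have hc : ContinuousAt Rf 1 :=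
      ((Real.continuousAt_rpow_const 1 (1 - α) (Or.inl one_ne_zero))).sub
        (continuous_pow 2).continuousAt
    have h0 : Rf 1 = 0 := by simp [hRdef]
    have h1 := hc.tendsto
    rw [h0] at h1
    exact h1.mono_left nhdsWithin_le_nhds
  have hev : ∀ᶠ d in nhdsWithin (1:ℝ) (Set.Iio 1), Rf d < L (3/2) ∧ d ∈ Set.Ioo (1/2 : ℝ) 1 := by
    filter_upwards [hRtend.eventually_lt_const hL32,
      Ioo_mem_nhdsLT_of_mem (by norm_num : (1:ℝ) ∈ Set.Ioc (1/2 : ℝ) 1)] with d h1 h2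
    exact ⟨h1, h2⟩
  obtain ⟨d₂, hd₂1, hd₂2⟩ := hev.exists
  obtain ⟨hd₂lo, hd₂hi⟩ := hd₂2
  have hR0 : 0 < Rf d₂ := by
    have h9 : d₂ ^ (2:ℝ) < d₂ ^ (1 - α) :=
      Real.rpow_lt_rpow_of_exponent_gt (by linarith) hd₂hi (by linarith)
    rw [Real.rpow_two] at h9
    simp only [hRdef]
    linarith
  have hLcont : ContinuousOn L (Set.Icc 1 (3/2)) := by
    intro y hy
    exact ((continuous_pow 2).continuousWithinAt).sub
      (Real.continuousAt_rpow_const y (1 - α) (Or.inl (by linarith [hy.1]))).continuousWithinAt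
  have hL1 : L 1 = 0 := by simp [hLdef]
  have hmem : Rf d₂ ∈ Set.Ioo (L 1) (L (3/2)) := by
    rw [hL1]; exact ⟨hR0, hd₂1⟩
  obtain ⟨d₁, hd₁mem, hLd₁⟩ := intermediate_value_Ioo (by norm_num : (1:ℝ) ≤ 3/2) hLcont hmem
  exact vortex_aux α hα d₁ d₂ hd₁mem.1 (by linarith) hd₂hi (by linarith [hd₁mem.2]) hLd₁
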